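/- arXiv:1201.1099 — 2 statements merged into one kernel-verified Lean document; each statement's English description precedes it below -/
import Mathlib

section
/- Under the linear map ψ: R^{E ∪ E_0} → Q_n defined by ψ(e_{(ij)}) = e_{ij} + e_{ji} for (ij) ∈ E and ψ(e_{(0i)}) = q(i) for i ∈ V, every cut vector satisfies ψ(δ(S)) = 2c(S) for all S ⊆ V; in particular ψ(δ(V)) = 0. -/
/-- The map ψ (sending the symmetric basis vector e_{(ij)} to e_{ij}+e_{ji}
and e_{(0i)} to q(i)) sends every cut vector δ(S) to 2c(S); in particular
ψ(δ(V)) = 0. Here a vector of R^{E ∪ E_0} is modelled by its symmetric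
V-part d together with its E_0-part x0. -/
theorem stmt16 {V : Type*} [Fintype V] [DecidableEq V]
    (ψ : (V → V → ℝ) → (V → ℝ) → V → V → ℝ)
    (hψ : ∀ (d : V → V → ℝ) (x0 : V → ℝ) (i j : V),
      ψ d x0 i j = if i = j then 0 else d i j + x0 i - x0 j)
    (δV : Finset V → V → V → ℝ)
    (hδV : ∀ S i j, δV S i j =
      if (i ∈ S ∧ j ∉ S) ∨ (j ∈ S ∧ i ∉ S) then 1 else 0)
    (δ0 : Finset V → V → ℝ)
    (hδ0 : ∀ S i, δ0 S i = if i ∈ S then 1 else 0)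
    (c : Finset V → V → V → ℝ)
    (hc : ∀ S i j, c S i j = if i ∈ S ∧ j ∉ S then 1 else 0) :
    (∀ S : Finset V, ∀ i j, ψ (δV S) (δ0 S) i j = 2 * c S i j) ∧
    (∀ i j, ψ (δV Finset.univ) (δ0 Finset.univ) i j = 0) := by
  have main : ∀ S : Finset V, ∀ i j, ψ (δV S) (δ0 S) i j = 2 * c S i j := by
    intro S i j
    rw [hψ, hδV, hδ0, hδ0, hc]
    by_cases hij : i = j
    · subst hij; simp
    · simp only [if_neg hij]
      by_cases hi : i ∈ S <;> by_cases hj : j ∈ S <;> simp [hi, hj] <;> ring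
  refine ⟨main, fun i j => ?_⟩
  rw [main Finset.univ i j, hc]
  simp
end

section
/- The vector g(ij) := (e_{ij} + e_{ji}) + (1/n)(q(i) - q(j)) lies in the space Q_n, and differs from 2e_{ij} by a linear combination of characteristic vectors of bitriangles: 2e_{ij} - (1/n) ∑_{k ∈ V−{i,j}} f^{T(ijk)} = g(ij). -/
/-- The canonical representative g(ij) = (e_{ij}+e_{ji}) + (1/n)(q(i)-q(j))
of the non-negativity facet vector lies in Q_n and equals
2e_{ij} - (1/n) ∑_{k ∉ {i,j}} f^{T(ijk)}. -/
theorem stmt19 {V : Type*} [Fintype V] [DecidableEq V]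
    (n : ℕ) (hn : Fintype.card V = n) (h3 : 3 ≤ n)
    (i j : V) (hij : i ≠ j)
    (e : V → V → V → V → ℝ)
    (he : ∀ a b k l, e a b k l = if k = a ∧ l = b then 1 else 0)
    (q : V → V → V → ℝ)
    (hq : ∀ m k l, q m k l =
      if k = m ∧ l ≠ m then 1 else if l = m ∧ k ≠ m then -1 else 0)
    (fT : V → V → V → V → V → ℝ)
    (hfT : ∀ a b c k l, fT a b c k l =
      (e a b k l + e b c k l + e c a k l) - (e b a k l + e c b k l + e a c k l))
    (gij : V → V → ℝ)
    (hgij : ∀ k l, gij k l =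
      (e i j k l + e j i k l) + (1 / (n : ℝ)) * (q i k l - q j k l)) :
    (∃ (s : V → V → ℝ) (w : V → ℝ), (∀ k l, s k l = s l k) ∧
      ∀ k l, k ≠ l → gij k l = s k l + w k - w l) ∧
    (∀ k l, 2 * e i j k l
        - (1 / (n : ℝ)) * ∑ m ∈ Finset.univ \ {i, j}, fT i j m k l
      = gij k l) := by
  have hn0 : (n : ℝ) ≠ 0 := by
    have : 0 < n := by omega
    exact_mod_cast this.ne'
  constructor
  · refine ⟨fun k l => e i j k l + e j i k l,
      fun m => (1 / (n : ℝ)) * ((if m = i then 1 else 0) - (if m = j then 1 else 0)),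
      ?_, ?_⟩
    · intro k l
      simp only [he]
      rw [add_comm]
      congr 1 <;> simp [and_comm]
    · intro k l hkl
      rw [hgij, hq, hq]
      by_cases hki : k = i <;> by_cases hkj : k = j <;>
        by_cases hli : l = i <;> by_cases hlj : l = j <;>
        simp_all <;> field_simp <;> ring
  · intro k l
    have hij' : i ∉ ({j} : Finset V) := by simpa using hij
    have hcard : (Finset.univ \ ({i, j} : Finset V)).card = n - 2 := by
      rw [Finset.card_sdiff_of_subset (Finset.subset_univ _), Finset.card_univ, hn,
        Finset.card_insert_of_notMem hij', Finset.card_singleton]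
    have key : ∀ (c : Prop) [Decidable c] (x : V),
        (∑ m ∈ Finset.univ \ ({i, j} : Finset V), if c ∧ x = m then (1 : ℝ) else 0)
          = if c ∧ x ∈ Finset.univ \ ({i, j} : Finset V) then 1 else 0 := by
      intro c _ x
      by_cases hc : c
      · simp [hc, Finset.sum_ite_eq]
      · simp [hc]
    have key2 : ∀ (c : Prop) [Decidable c] (x : V),
        (∑ m ∈ Finset.univ \ ({i, j} : Finset V), if x = m ∧ c then (1 : ℝ) else 0)
          = if x ∈ Finset.univ \ ({i, j} : Finset V) ∧ c then 1 else 0 := by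
      intro c _ x
      by_cases hc : c
      · simp [hc, Finset.sum_ite_eq]
      · simp [hc]
    have hsum : ∑ m ∈ Finset.univ \ ({i, j} : Finset V), fT i j m k l
        = ((n : ℝ) - 2) * (e i j k l - e j i k l)
          + (if k = j ∧ l ∈ Finset.univ \ ({i, j} : Finset V) then 1 else 0)
          + (if k ∈ Finset.univ \ ({i, j} : Finset V) ∧ l = i then 1 else 0)
          - (if k ∈ Finset.univ \ ({i, j} : Finset V) ∧ l = j then 1 else 0)
          - (if k = i ∧ l ∈ Finset.univ \ ({i, j} : Finset V) then 1 else 0) := by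
      have hterm : ∀ m, fT i j m k l
          = (e i j k l - e j i k l)
            + (if k = j ∧ l = m then (1:ℝ) else 0)
            + (if k = m ∧ l = i then (1:ℝ) else 0)
            - (if k = m ∧ l = j then (1:ℝ) else 0)
            - (if k = i ∧ l = m then (1:ℝ) else 0) := by
        intro m
        rw [hfT]
        rw [he j m k l, he m i k l, he m j k l, he i m k l]
        ring
      rw [Finset.sum_congr rfl (fun m _ => hterm m)]
      rw [Finset.sum_sub_distrib, Finset.sum_sub_distrib, Finset.sum_add_distrib,
        Finset.sum_add_distrib, Finset.sum_const, hcard]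
      rw [key (k = j) l, key2 (l = i) k, key2 (l = j) k, key (k = i) l]
      have hcast : ((n - 2 : ℕ) : ℝ) = (n : ℝ) - 2 := by
        have : 2 ≤ n := by omega
        push_cast [this]
        ring
      rw [nsmul_eq_mul, hcast]
    rw [hsum, hgij, hq, hq, he i j k l, he j i k l]
    simp only [Finset.mem_sdiff, Finset.mem_univ, Finset.mem_insert,
      Finset.mem_singleton, true_and]
    clear key key2 hsum hcard hij' he hq hfT hgij
    by_cases hki : k = i <;> by_cases hkj : k = j <;>
      by_cases hli : l = i <;> by_cases hlj : l = j <;>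
      simp_all <;> field_simp <;> ring
end
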